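/- Let c be a positive integer and let λ ≥ 1 be a real number. Let G be a finite simple graph that is μ-bounded with parameter c and whose smallest adjacency eigenvalue satisfies λ_min(G) ≥ −λ. Then every vertex x of G is contained in a maximal clique of G whose order is at least (d(x) − (⌊λ²⌋ choose 2)·(c−1))/⌊λ²⌋ + 1. -/

import Mathlib

open Finset Matrix
open scoped Pointwise

/-- `G` is μ-bounded with parameter `c`: every pair of distinct non-adjacent vertices
has at most `c` common neighbors. -/
def MuBounded {V : Type*} [Fintype V] [DecidableEq V] (G : SimpleGraph V)
    [DecidableRel G.Adj] (c : ℕ) : Prop :=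
  ∀ u v : V, u ≠ v → ¬ G.Adj u v →
    ((G.neighborFinset u) ∩ (G.neighborFinset v)).card ≤ c

/-- `s` is a maximal clique of `G`. -/
def IsMaximalCliqueF {V : Type*} (G : SimpleGraph V) (s : Finset V) : Prop :=
  G.IsClique (s : Set V) ∧ ∀ t : Finset V, G.IsClique (t : Set V) → s ⊆ t → s = t

/-- Every (real) eigenvalue of the adjacency matrix of `G` is at least `r`,
i.e. `λ_min(G) ≥ r`. -/
def MinEigGE {V : Type*} [Fintype V] [DecidableEq V] (G : SimpleGraph V)
    [DecidableRel G.Adj] (r : ℝ) : Prop :=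
  ∀ μ ∈ spectrum ℝ (G.adjMatrix ℝ), r ≤ μ

lemma quad_form_ge {V : Type*} [Fintype V] [DecidableEq V]
    (G : SimpleGraph V) [DecidableRel G.Adj] (lam : ℝ)
    (heig : MinEigGE G (-lam)) (z : V → ℝ) :
    -(lam * (z ⬝ᵥ z)) ≤ z ⬝ᵥ (G.adjMatrix ℝ *ᵥ z) := by
  classical
  have hA : (G.adjMatrix ℝ).IsHermitian := by
    rw [Matrix.IsHermitian, conjTranspose_eq_transpose_of_trivial]
    exact G.isSymm_adjMatrix
  have hB : (G.adjMatrix ℝ + algebraMap ℝ (Matrix V V ℝ) lam).IsHermitian := by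
    apply hA.add
    rw [Matrix.IsHermitian, conjTranspose_eq_transpose_of_trivial]
    simp [Algebra.algebraMap_eq_smul_one, Matrix.transpose_smul]
  have hpsd : (G.adjMatrix ℝ + algebraMap ℝ (Matrix V V ℝ) lam).PosSemidef := by
    rw [hB.posSemidef_iff_eigenvalues_nonneg, Pi.le_def]; simp only [Pi.zero_apply]
    intro i
    have hmem : hB.eigenvalues i ∈
        spectrum ℝ (G.adjMatrix ℝ) + ({lam} : Set ℝ) := by
      rw [spectrum.add_singleton_eq]
      exact hB.eigenvalues_mem_spectrum_real i
    rw [Set.mem_add] at hmem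
    obtain ⟨μ, hμ, b, hb, hsum⟩ := hmem
    rw [Set.mem_singleton_iff] at hb
    have h1 := heig μ hμ
    rw [← hsum, hb]
    linarith
  have h2 := hpsd.dotProduct_mulVec_nonneg z
  have hstar : star z = z := by simp
  rw [hstar] at h2
  have heq : (G.adjMatrix ℝ + algebraMap ℝ (Matrix V V ℝ) lam) *ᵥ z
      = G.adjMatrix ℝ *ᵥ z + lam • z := by
    rw [Matrix.add_mulVec, Algebra.algebraMap_eq_smul_one, Matrix.smul_mulVec,
      Matrix.one_mulVec]
  rw [heq, dotProduct_add, dotProduct_smul] at h2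
  simp only [smul_eq_mul] at h2
  linarith

lemma indep_card_le {V : Type*} [Fintype V] [DecidableEq V]
    (G : SimpleGraph V) [DecidableRel G.Adj] (lam : ℝ) (hlam : 1 ≤ lam)
    (heig : MinEigGE G (-lam)) (x : V) (I : Finset V) (hI : I ⊆ G.neighborFinset x)
    (hind : ∀ a ∈ I, ∀ b ∈ I, a ≠ b → ¬ G.Adj a b) :
    (I.card : ℝ) ≤ lam ^ 2 := by
  classical
  have hxI : x ∉ I := by
    intro hx
    exact G.irrefl ((SimpleGraph.mem_neighborFinset _ _ _).mp (hI hx))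
  set z : V → ℝ := fun v => if v = x then lam else if v ∈ I then -1 else 0 with hz
  have hzz : z ⬝ᵥ z = lam ^ 2 + I.card := by
    rw [dotProduct]
    have h1 : ∀ v : V, z v * z v
        = (if v = x then lam ^ 2 else 0) + (if v ∈ I then 1 else 0) := by
      intro v
      by_cases hvx : v = x
      · subst hvx; simp [hz, hxI]; ring
      · by_cases hvI : v ∈ I <;> simp [hz, hvx, hvI]
    rw [Finset.sum_congr rfl (fun v _ => h1 v), Finset.sum_add_distrib,
      Finset.sum_ite_eq' Finset.univ x (fun _ => lam ^ 2), Finset.sum_ite_mem]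
    simp
  have hSx : ∑ u ∈ G.neighborFinset x, z u = -(I.card : ℝ) := by
    have h2 : ∀ u ∈ G.neighborFinset x, z u = if u ∈ I then (-1 : ℝ) else 0 := by
      intro u hu
      have hux : u ≠ x := by
        rintro rfl
        exact G.irrefl ((SimpleGraph.mem_neighborFinset _ _ _).mp hu)
      simp [hz, hux]
    rw [Finset.sum_congr rfl h2, Finset.sum_ite_mem,
      Finset.inter_eq_right.mpr hI]
    simp
  have hSv : ∀ v ∈ I, ∑ u ∈ G.neighborFinset v, z u = lam := by
    intro v hv
    have hadjxv : G.Adj x v := (SimpleGraph.mem_neighborFinset _ _ _).mp (hI hv)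
    have h3 : ∀ u ∈ G.neighborFinset v, z u = if u = x then lam else 0 := by
      intro u hu
      by_cases hux : u = x
      · simp [hz, hux]
      · have hadj : G.Adj v u := (SimpleGraph.mem_neighborFinset _ _ _).mp hu
        have huI : u ∉ I := by
          intro huI
          exact hind v hv u huI (fun h => G.irrefl (h ▸ hadj)) hadj
        simp [hz, hux, huI]
    rw [Finset.sum_congr rfl h3, Finset.sum_ite_eq' (G.neighborFinset v) x (fun _ => lam),
      if_pos ((SimpleGraph.mem_neighborFinset _ _ _).mpr hadjxv.symm)]
  have hform : z ⬝ᵥ (G.adjMatrix ℝ *ᵥ z) = -2 * I.card * lam := by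
    rw [dotProduct]
    have h4 : ∀ v : V, z v * (G.adjMatrix ℝ *ᵥ z) v
        = (if v = x then -(lam * I.card) else 0) + (if v ∈ I then -lam else 0) := by
      intro v
      rw [SimpleGraph.adjMatrix_mulVec_apply]
      by_cases hvx : v = x
      · subst hvx; rw [hSx]; simp [hz, hxI]
      · by_cases hvI : v ∈ I
        · rw [hSv v hvI]; simp [hz, hvx, hvI]
        · simp [hz, hvx, hvI]
    rw [Finset.sum_congr rfl (fun v _ => h4 v), Finset.sum_add_distrib,
      Finset.sum_ite_eq' Finset.univ x (fun _ => -(lam * I.card)), Finset.sum_ite_mem]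
    simp
    ring
  have hq := quad_form_ge G lam heig z
  rw [hzz, hform] at hq
  have hlam0 : 0 < lam := by linarith
  nlinarith [hq, hlam0, hlam]

lemma exists_maximal_clique {V : Type*} [Fintype V] [DecidableEq V]
    (G : SimpleGraph V) (s : Finset V) (hs : G.IsClique (s : Set V)) :
    ∃ t : Finset V, IsMaximalCliqueF G t ∧ s ⊆ t := by
  classical
  have hne : (Finset.univ.powerset.filter
      (fun t : Finset V => G.IsClique (t : Set V) ∧ s ⊆ t)).Nonempty :=
    ⟨s, by simp [hs]⟩
  obtain ⟨t, ht, hmax⟩ := Finset.exists_max_image _ Finset.card hne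
  simp only [Finset.mem_filter, Finset.mem_powerset] at ht
  refine ⟨t, ⟨ht.2.1, ?_⟩, ht.2.2⟩
  intro u hu htu
  have hu' : u ∈ Finset.univ.powerset.filter
      (fun t : Finset V => G.IsClique (t : Set V) ∧ s ⊆ t) := by
    simp [hu, ht.2.2.trans htu]
  exact Finset.eq_of_subset_of_card_le htu (hmax u hu')

theorem statement0 {V : Type*} [Fintype V] [DecidableEq V]
    (G : SimpleGraph V) [DecidableRel G.Adj]
    (c : ℕ) (hc : 0 < c) (lam : ℝ) (hlam : 1 ≤ lam)
    (hmu : MuBounded G c) (heig : MinEigGE G (-lam)) (x : V) :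
    ∃ s : Finset V, IsMaximalCliqueF G s ∧ x ∈ s ∧
      ((G.degree x : ℝ) - (Nat.choose ⌊lam ^ 2⌋₊ 2 : ℝ) * ((c : ℝ) - 1)) / (⌊lam ^ 2⌋₊ : ℝ) + 1
        ≤ (s.card : ℝ) := by
  classical
  set m := ⌊lam ^ 2⌋₊ with hmdef
  have hlam2 : (1 : ℝ) ≤ lam ^ 2 := by nlinarith
  have hm1 : 1 ≤ m := Nat.le_floor (by exact_mod_cast hlam2)
  have hmR : (1 : ℝ) ≤ (m : ℝ) := by exact_mod_cast hm1
  have hc1 : (0 : ℝ) ≤ (c : ℝ) - 1 := by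
    have : (1 : ℝ) ≤ (c : ℝ) := by exact_mod_cast hc
    linarith
  by_cases hdeg : G.neighborFinset x = ∅
  · obtain ⟨t, htmax, hst⟩ := exists_maximal_clique G {x} (by simp)
    refine ⟨t, htmax, hst (by simp), ?_⟩
    have hd : G.degree x = 0 := by
      rw [← SimpleGraph.card_neighborFinset_eq_degree, hdeg, Finset.card_empty]
    have hcard : (1 : ℝ) ≤ (t.card : ℝ) := by
      have hx : x ∈ t := hst (by simp)
      exact_mod_cast Finset.card_pos.mpr ⟨x, hx⟩
    have hnum : ((G.degree x : ℝ) - ((m.choose 2 : ℕ) : ℝ) * ((c : ℝ) - 1)) / (m : ℝ) ≤ 0 := by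
      apply div_nonpos_of_nonpos_of_nonneg
      · rw [hd]
        push_cast
        nlinarith [Nat.cast_nonneg (α := ℝ) (m.choose 2)]
      · linarith
    linarith
  · have hNne : (G.neighborFinset x).Nonempty := Finset.nonempty_iff_ne_empty.mpr hdeg
    obtain ⟨v0, hv0⟩ := hNne
    have hv0F : ({v0} : Finset V) ∈ (G.neighborFinset x).powerset.filter
        (fun I : Finset V => ∀ a ∈ I, ∀ b ∈ I, a ≠ b → ¬ G.Adj a b) := by
      simp only [Finset.mem_filter, Finset.mem_powerset, Finset.singleton_subset_iff,
        Finset.mem_singleton]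
      exact ⟨hv0, by rintro a rfl b rfl h; exact absurd rfl h⟩
    obtain ⟨I, hIF, hImax⟩ := Finset.exists_max_image _ Finset.card ⟨_, hv0F⟩
    simp only [Finset.mem_filter, Finset.mem_powerset] at hIF
    obtain ⟨hIsub, hind⟩ := hIF
    have hk1 : 1 ≤ I.card := by
      have := hImax _ hv0F
      simpa using this
    have hkm : I.card ≤ m :=
      Nat.le_floor (indep_card_le G lam hlam heig x I hIsub hind)
    -- exclusive neighbor sets
    set E : V → Finset V := fun y => (G.neighborFinset x).filter
      (fun u => u = y ∨ (G.Adj u y ∧ ∀ y' ∈ I, y' ≠ y → ¬ G.Adj u y')) with hEdef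
    set D : Finset V := (G.neighborFinset x).filter
      (fun u => ∃ y ∈ I, ∃ y' ∈ I, y ≠ y' ∧ G.Adj u y ∧ G.Adj u y') with hDdef
    have hcover : G.neighborFinset x ⊆ D ∪ I.biUnion E := by
      intro u hu
      by_cases huI : u ∈ I
      · exact Finset.mem_union_right _ (Finset.mem_biUnion.mpr
          ⟨u, huI, Finset.mem_filter.mpr ⟨hu, Or.inl rfl⟩⟩)
      · have hex : ∃ y ∈ I, G.Adj u y := by
          by_contra hno
          push_neg at hno
          have hmem : insert u I ∈ (G.neighborFinset x).powerset.filter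
              (fun I : Finset V => ∀ a ∈ I, ∀ b ∈ I, a ≠ b → ¬ G.Adj a b) := by
            simp only [Finset.mem_filter, Finset.mem_powerset]
            refine ⟨Finset.insert_subset hu hIsub, ?_⟩
            intro a ha b hb hab
            rcases Finset.mem_insert.mp ha with rfl | ha' <;>
              rcases Finset.mem_insert.mp hb with rfl | hb'
            · exact absurd rfl hab
            · exact hno b hb'
            · exact fun h => hno a ha' h.symm
            · exact hind a ha' b hb' hab
          have h2 := hImax _ hmem
          rw [Finset.card_insert_of_notMem huI] at h2
          omega
        obtain ⟨y, hyI, hadj⟩ := hex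
        by_cases h2 : ∃ y' ∈ I, y' ≠ y ∧ G.Adj u y'
        · obtain ⟨y', hy', hne, hadj'⟩ := h2
          exact Finset.mem_union_left _ (Finset.mem_filter.mpr
            ⟨hu, y, hyI, y', hy', Ne.symm hne, hadj, hadj'⟩)
        · push_neg at h2
          exact Finset.mem_union_right _ (Finset.mem_biUnion.mpr
            ⟨y, hyI, Finset.mem_filter.mpr ⟨hu, Or.inr ⟨hadj, h2⟩⟩⟩)
    -- bound on D
    have hDnat : D.card ≤ (I.card.choose 2) * (c - 1) := by
      have hsub2 : D ⊆ (Finset.powersetCard 2 I).biUnion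
          (fun p => (G.neighborFinset x).filter (fun u => ∀ y ∈ p, G.Adj u y)) := by
        intro u hu
        rw [hDdef, Finset.mem_filter] at hu
        obtain ⟨hux, y, hy, y', hy', hne, h1, h2⟩ := hu
        refine Finset.mem_biUnion.mpr ⟨{y, y'}, ?_, ?_⟩
        · rw [Finset.mem_powersetCard]
          exact ⟨Finset.insert_subset hy (Finset.singleton_subset_iff.mpr hy'),
            Finset.card_pair hne⟩
        · refine Finset.mem_filter.mpr ⟨hux, ?_⟩
          intro w hw
          rcases Finset.mem_insert.mp hw with rfl | hw'
          · exact h1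
          · rw [Finset.mem_singleton] at hw'
            subst hw'
            exact h2
      have hbound : ∀ p ∈ Finset.powersetCard 2 I,
          ((G.neighborFinset x).filter (fun u => ∀ y ∈ p, G.Adj u y)).card ≤ c - 1 := by
        intro p hp
        rw [Finset.mem_powersetCard] at hp
        obtain ⟨hpI, hp2⟩ := hp
        obtain ⟨a, b, hab, rfl⟩ := Finset.card_eq_two.mp hp2
        have haI : a ∈ I := hpI (by simp)
        have hbI : b ∈ I := hpI (by simp)
        have hnadj : ¬ G.Adj a b := hind a haI b hbI hab
        have hxab : x ∈ G.neighborFinset a ∩ G.neighborFinset b := by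
          rw [Finset.mem_inter, SimpleGraph.mem_neighborFinset, SimpleGraph.mem_neighborFinset]
          exact ⟨((SimpleGraph.mem_neighborFinset _ _ _).mp (hIsub haI)).symm,
            ((SimpleGraph.mem_neighborFinset _ _ _).mp (hIsub hbI)).symm⟩
        have hsubset : (G.neighborFinset x).filter (fun u => ∀ y ∈ ({a, b} : Finset V), G.Adj u y)
            ⊆ (G.neighborFinset a ∩ G.neighborFinset b).erase x := by
          intro u hu
          rw [Finset.mem_filter] at hu
          have h1 : G.Adj u a := hu.2 a (by simp)
          have h2 : G.Adj u b := hu.2 b (by simp)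
          have hux : u ≠ x := ((SimpleGraph.mem_neighborFinset _ _ _).mp hu.1).ne'
          refine Finset.mem_erase.mpr ⟨hux, ?_⟩
          rw [Finset.mem_inter, SimpleGraph.mem_neighborFinset, SimpleGraph.mem_neighborFinset]
          exact ⟨h1.symm, h2.symm⟩
        calc ((G.neighborFinset x).filter (fun u => ∀ y ∈ ({a, b} : Finset V), G.Adj u y)).card
            ≤ ((G.neighborFinset a ∩ G.neighborFinset b).erase x).card :=
              Finset.card_le_card hsubset
          _ = (G.neighborFinset a ∩ G.neighborFinset b).card - 1 :=
              Finset.card_erase_of_mem hxab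
          _ ≤ c - 1 := by
              have := hmu a b hab hnadj
              omega
      calc D.card ≤ ((Finset.powersetCard 2 I).biUnion
            (fun p => (G.neighborFinset x).filter (fun u => ∀ y ∈ p, G.Adj u y))).card :=
            Finset.card_le_card hsub2
        _ ≤ ∑ p ∈ Finset.powersetCard 2 I,
              ((G.neighborFinset x).filter (fun u => ∀ y ∈ p, G.Adj u y)).card :=
            Finset.card_biUnion_le
        _ ≤ ∑ _p ∈ Finset.powersetCard 2 I, (c - 1) := Finset.sum_le_sum hbound
        _ = (I.card.choose 2) * (c - 1) := by
            rw [Finset.sum_const, Finset.card_powersetCard, smul_eq_mul]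
    have hD : (D.card : ℝ) ≤ ((I.card.choose 2 : ℕ) : ℝ) * ((c : ℝ) - 1) := by
      have := hDnat
      have hcast : (((I.card.choose 2) * (c - 1) : ℕ) : ℝ)
          = ((I.card.choose 2 : ℕ) : ℝ) * ((c : ℝ) - 1) := by
        rw [Nat.cast_mul, Nat.cast_sub hc]
        norm_num
      calc (D.card : ℝ) ≤ (((I.card.choose 2) * (c - 1) : ℕ) : ℝ) := by exact_mod_cast this
        _ = _ := hcast
    -- the degree count
    have hsumN : (G.degree x : ℝ) ≤ (D.card : ℝ) + ∑ y ∈ I, ((E y).card : ℝ) := by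
      have h1 : G.degree x ≤ D.card + ∑ y ∈ I, (E y).card := by
        calc G.degree x = (G.neighborFinset x).card :=
              (SimpleGraph.card_neighborFinset_eq_degree _ _).symm
          _ ≤ (D ∪ I.biUnion E).card := Finset.card_le_card hcover
          _ ≤ D.card + (I.biUnion E).card := Finset.card_union_le _ _
          _ ≤ D.card + ∑ y ∈ I, (E y).card := by
              have := Finset.card_biUnion_le (s := I) (t := E)
              omega
      exact_mod_cast h1
    -- choose good y
    have hk0R : (0 : ℝ) < (I.card : ℝ) := by exact_mod_cast hk1
    have hsum2 : ∑ _y ∈ I, (((G.degree x : ℝ) - ((I.card.choose 2 : ℕ) : ℝ) * ((c : ℝ) - 1))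
          / (I.card : ℝ)) ≤ ∑ y ∈ I, ((E y).card : ℝ) := by
      rw [Finset.sum_const, nsmul_eq_mul, mul_div_cancel₀ _ (ne_of_gt hk0R)]
      linarith
    obtain ⟨y, hyI, hEy⟩ := Finset.exists_le_of_sum_le (Finset.card_pos.mp hk1) hsum2
    -- properties of E y
    have hEsub : E y ⊆ G.neighborFinset x := Finset.filter_subset _ _
    have hadjEy : ∀ u ∈ E y, u ≠ y → G.Adj u y := by
      intro u hu hne
      rcases (Finset.mem_filter.mp hu).2 with rfl | h
      · exact absurd rfl hne
      · exact h.1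
    have hexcl : ∀ u ∈ E y, u ≠ y → ∀ y' ∈ I, y' ≠ y → ¬ G.Adj u y' := by
      intro u hu hne
      rcases (Finset.mem_filter.mp hu).2 with rfl | h
      · exact absurd rfl hne
      · exact h.2
    have hEnotI : ∀ u ∈ E y, u ≠ y → u ∉ I := by
      intro u hu hne huI
      exact hind u huI y hyI hne (hadjEy u hu hne)
    have hclq : G.IsClique ((insert x (E y) : Finset V) : Set V) := by
      rw [SimpleGraph.isClique_iff]
      intro a ha b hb hab
      simp only [Finset.coe_insert, Set.mem_insert_iff, Finset.mem_coe] at ha hb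
      rcases ha with rfl | haE
      · rcases hb with rfl | hbE
        · exact absurd rfl hab
        · exact (SimpleGraph.mem_neighborFinset _ _ _).mp (hEsub hbE)
      · rcases hb with rfl | hbE
        · exact ((SimpleGraph.mem_neighborFinset _ _ _).mp (hEsub haE)).symm
        -- both in E y
        by_cases hay : a = y
        · subst hay
          exact (hadjEy b hbE (Ne.symm hab)).symm
        by_cases hby : b = y
        · subst hby
          exact hadjEy a haE hab
        by_contra hnadj
        -- build a bigger independent set
        have haI : a ∉ I := hEnotI a haE hay
        have hbI : b ∉ I := hEnotI b hbE hby
        have hmem : insert a (insert b (I.erase y)) ∈ (G.neighborFinset x).powerset.filter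
            (fun I : Finset V => ∀ a ∈ I, ∀ b ∈ I, a ≠ b → ¬ G.Adj a b) := by
          simp only [Finset.mem_filter, Finset.mem_powerset]
          constructor
          · refine Finset.insert_subset (hEsub haE) (Finset.insert_subset (hEsub hbE) ?_)
            exact (Finset.erase_subset _ _).trans hIsub
          · intro p hp q hq hpq
            rcases Finset.mem_insert.mp hp with rfl | hp' <;>
              [skip; rcases Finset.mem_insert.mp hp' with rfl | hp'']
            · -- p = a
              rcases Finset.mem_insert.mp hq with rfl | hq' <;>
                [skip; rcases Finset.mem_insert.mp hq' with rfl | hq'']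
              · exact absurd rfl hpq
              · exact hnadj
              · exact hexcl p haE hay q (Finset.mem_of_mem_erase hq'')
                  (Finset.ne_of_mem_erase hq'')
            · -- p = b
              rcases Finset.mem_insert.mp hq with rfl | hq' <;>
                [skip; rcases Finset.mem_insert.mp hq' with rfl | hq'']
              · exact fun h => hnadj h.symm
              · exact absurd rfl hpq
              · exact hexcl p hbE hby q (Finset.mem_of_mem_erase hq'')
                  (Finset.ne_of_mem_erase hq'')
            · -- p in erase
              rcases Finset.mem_insert.mp hq with rfl | hq' <;>
                [skip; rcases Finset.mem_insert.mp hq' with rfl | hq'']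
              · exact fun h => hexcl q haE hay p (Finset.mem_of_mem_erase hp'')
                  (Finset.ne_of_mem_erase hp'') h.symm
              · exact fun h => hexcl q hbE hby p (Finset.mem_of_mem_erase hp'')
                  (Finset.ne_of_mem_erase hp'') h.symm
              · exact hind p (Finset.mem_of_mem_erase hp'') q (Finset.mem_of_mem_erase hq'') hpq
        have hcount := hImax _ hmem
        have hbe : b ∉ I.erase y := fun h => hbI (Finset.mem_of_mem_erase h)
        have hae : a ∉ insert b (I.erase y) := by
          simp only [Finset.mem_insert]
          rintro (rfl | h)
          · exact hab rfl
          · exact haI (Finset.mem_of_mem_erase h)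
        rw [Finset.card_insert_of_notMem hae, Finset.card_insert_of_notMem hbe,
          Finset.card_erase_of_mem hyI] at hcount
        omega
    have hxE : x ∉ E y :=
      fun h => G.irrefl ((SimpleGraph.mem_neighborFinset _ _ _).mp (hEsub h))
    obtain ⟨t, htmax, hsub⟩ := exists_maximal_clique G _ hclq
    refine ⟨t, htmax, hsub (Finset.mem_insert_self _ _), ?_⟩
    have hcardt : ((E y).card : ℝ) + 1 ≤ (t.card : ℝ) := by
      have h1 := Finset.card_le_card hsub
      rw [Finset.card_insert_of_notMem hxE] at h1
      exact_mod_cast h1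
    have hd0 : (0 : ℝ) ≤ (G.degree x : ℝ) := Nat.cast_nonneg _
    have hkmR : (I.card : ℝ) ≤ (m : ℝ) := by exact_mod_cast hkm
    have hmono : ((G.degree x : ℝ) - ((m.choose 2 : ℕ) : ℝ) * ((c : ℝ) - 1)) / (m : ℝ)
        ≤ ((G.degree x : ℝ) - ((I.card.choose 2 : ℕ) : ℝ) * ((c : ℝ) - 1)) / (I.card : ℝ) := by
      rw [div_le_div_iff₀ (by linarith) hk0R, Nat.cast_choose_two, Nat.cast_choose_two]
      nlinarith [mul_nonneg (sub_nonneg.mpr hkmR) hd0,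
        mul_nonneg (mul_nonneg (mul_nonneg (le_of_lt hk0R) (by linarith : (0:ℝ) ≤ (m:ℝ))) hc1)
          (sub_nonneg.mpr hkmR)]
    linarith
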